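/- Let G be a finite simple graph and L a list assignment on G. Suppose S ⊆ V(G) is such that every vertex v ∈ S satisfies deg_G(v) ≤ |L(v)|, the induced subgraph G[S] is degree-choosable, and the induced subgraph of G on V(G) \ S has a proper L-coloring. Then G has a proper L-coloring. -/
import Mathlib


open SimpleGraph

/-- Let `G` be a finite simple graph and `L` a list assignment.  If
`S ⊆ V(G)` is such that every `v ∈ S` satisfies `deg_G(v) ≤ |L v|`, the induced subgraph
`G[S]` is degree-choosable, and the induced subgraph of `G` on the complement of `S` has
a proper `L`-coloring, then `G` has a proper `L`-coloring.  (The degree of a vertex `v`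
of `G[S]` is expressed as `((G.induce S).neighborSet v).ncard`.) -/
theorem extend_coloring_degree_choosable {V : Type*} [Fintype V]
    (G : SimpleGraph V) [DecidableRel G.Adj] (L : V → Finset ℕ)
    (S : Set V)
    (hdeg : ∀ v ∈ S, G.degree v ≤ (L v).card)
    (hdc : ∀ L' : ↥S → Finset ℕ,
      (∀ v : ↥S, ((G.induce S).neighborSet v).ncard ≤ (L' v).card) →
      ∃ g : ↥S → ℕ, (∀ v, g v ∈ L' v) ∧ ∀ x y, (G.induce S).Adj x y → g x ≠ g y)
    (hcol : ∃ f : ↥(Sᶜ) → ℕ, (∀ v : ↥(Sᶜ), f v ∈ L ↑v) ∧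
      ∀ x y, (G.induce Sᶜ).Adj x y → f x ≠ f y) :
    ∃ f : V → ℕ, (∀ v, f v ∈ L v) ∧ ∀ x y, G.Adj x y → f x ≠ f y := by
  classical
  obtain ⟨f, hfmem, hfprop⟩ := hcol
  -- the finset of neighbors of v outside S
  set B : V → Finset V := fun v => (G.neighborFinset v).filter (· ∈ Sᶜ) with hB
  -- colors used by outside neighbors
  set T : (v : V) → Finset ℕ := fun v =>
    (B v).attach.image (fun u => f ⟨u.1, (Finset.mem_filter.mp u.2).2⟩) with hT
  set L' : ↥S → Finset ℕ := fun v => L v.1 \ T v.1 with hL'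
  have hTcard : ∀ v, (T v).card ≤ (B v).card := by
    intro v
    calc (T v).card ≤ (B v).attach.card := Finset.card_image_le
      _ = (B v).card := Finset.card_attach
  have hAcard : ∀ v : ↥S,
      ((G.induce S).neighborSet v).ncard
        = ((G.neighborFinset v.1).filter (· ∈ S)).card := by
    intro v
    have himg : Subtype.val '' ((G.induce S).neighborSet v)
        = ↑((G.neighborFinset v.1).filter (· ∈ S)) := by
      ext u
      simp only [Set.mem_image, Finset.coe_filter, Set.mem_setOf_eq,
        mem_neighborFinset, mem_neighborSet]
      constructor
      · rintro ⟨w, hw, rfl⟩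
        exact ⟨hw, w.2⟩
      · rintro ⟨hadj, hu⟩
        exact ⟨⟨u, hu⟩, hadj, rfl⟩
    calc ((G.induce S).neighborSet v).ncard
        = (Subtype.val '' ((G.induce S).neighborSet v)).ncard :=
          (Set.ncard_image_of_injective _ Subtype.val_injective).symm
      _ = (((G.neighborFinset v.1).filter (· ∈ S)) : Set V).ncard := by rw [himg]
      _ = ((G.neighborFinset v.1).filter (· ∈ S)).card := Set.ncard_coe_finset _
  have hsplit : ∀ v : V,
      ((G.neighborFinset v).filter (· ∈ S)).card + (B v).card = G.degree v := by
    intro v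
    simp only [hB]
    rw [← G.card_neighborFinset_eq_degree, ← Finset.card_filter_add_card_filter_not
      (s := G.neighborFinset v) (p := (· ∈ S))]
    congr 2
  have hbig : ∀ v : ↥S, ((G.induce S).neighborSet v).ncard ≤ (L' v).card := by
    intro v
    have h1 : (L v.1).card ≤ (L' v).card + (T v.1).card := by
      have : L v.1 ⊆ (L v.1 \ T v.1) ∪ T v.1 := by
        intro a ha
        by_cases h : a ∈ T v.1
        · exact Finset.mem_union_right _ h
        · exact Finset.mem_union_left _ (Finset.mem_sdiff.mpr ⟨ha, h⟩)
      calc (L v.1).card ≤ ((L v.1 \ T v.1) ∪ T v.1).card := Finset.card_le_card this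
        _ ≤ (L v.1 \ T v.1).card + (T v.1).card := Finset.card_union_le _ _
    have h2 := hTcard v.1
    have h3 := hsplit v.1
    have h4 := hdeg v.1 v.2
    rw [hAcard v]
    omega
  obtain ⟨g, hgmem, hgprop⟩ := hdc L' hbig
  refine ⟨fun v => if hv : v ∈ S then g ⟨v, hv⟩ else f ⟨v, hv⟩, ?_, ?_⟩
  · intro v
    by_cases hv : v ∈ S
    · simp only [hv, dif_pos]
      exact Finset.mem_sdiff.mp (hgmem ⟨v, hv⟩) |>.1
    · simp only [hv, dif_neg, not_false_iff]
      exact hfmem ⟨v, hv⟩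
  · intro x y hxy
    by_cases hx : x ∈ S <;> by_cases hy : y ∈ S
    · simp only [hx, hy, dif_pos]
      exact hgprop ⟨x, hx⟩ ⟨y, hy⟩ hxy
    · simp only [hx, hy, dif_pos, dif_neg, not_false_iff]
      -- g x ∈ L' x avoids f y, since f y ∈ T x
      have hmem : f ⟨y, hy⟩ ∈ T x := by
        have hyB : y ∈ B x := by
          simp [hB, mem_neighborFinset, hxy, hy]
        exact Finset.mem_image.mpr ⟨⟨y, hyB⟩, Finset.mem_attach _ _, rfl⟩
      have := (Finset.mem_sdiff.mp (hgmem ⟨x, hx⟩)).2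
      intro h
      exact this (h ▸ hmem)
    · simp only [hx, hy, dif_pos, dif_neg, not_false_iff]
      have hmem : f ⟨x, hx⟩ ∈ T y := by
        have hxB : x ∈ B y := by
          simp [hB, mem_neighborFinset, hxy.symm, hx]
        exact Finset.mem_image.mpr ⟨⟨x, hxB⟩, Finset.mem_attach _ _, rfl⟩
      have := (Finset.mem_sdiff.mp (hgmem ⟨y, hy⟩)).2
      intro h
      exact this (h ▸ hmem)
    · simp only [hx, hy, dif_neg, not_false_iff]
      exact hfprop ⟨x, hx⟩ ⟨y, hy⟩ hxy
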